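/- Let D be a discrete valuation ring with uniformizer z, and let F be an ω × n matrix over D of rank ω whose column module has invariant factors z^{i_1}, ..., z^{i_ω} with i_1 ≤ ... ≤ i_ω. Then there exists an n × ω matrix A over D with F · A = z^{i_ω} · I_ω. -/

import Mathlib

/-- If the column module of the full-rank `ω × n` matrix `F` over a DVR `D` has
invariant factors `z^{i_1}, …, z^{i_ω}` (expressed via a Smith normal form
decomposition with `i` monotone), then there exists `A` with `F · A = z^{i_ω} · I`. -/
theorem stmt5 {ω n : ℕ} (hω : 0 < ω) (hn : ω ≤ n)
    (D : Type*) [CommRing D] [IsDomain D] [IsDiscreteValuationRing D]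
    (z : D) (hz : Irreducible z)
    (i : Fin ω → ℕ) (hmono : Monotone i)
    (U : Matrix (Fin ω) (Fin ω) D) (V : Matrix (Fin n) (Fin n) D)
    (hU : IsUnit U) (hV : IsUnit V)
    (F : Matrix (Fin ω) (Fin n) D)
    (hF : F = U * (Matrix.of fun (j : Fin ω) (k : Fin n) =>
        if (j : ℕ) = (k : ℕ) then z ^ i j else 0) * V) :
    ∃ A : Matrix (Fin n) (Fin ω) D,
      F * A = z ^ (i ⟨ω - 1, by omega⟩) • (1 : Matrix (Fin ω) (Fin ω) D) := by
  set top : Fin ω := ⟨ω - 1, by omega⟩ with htop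
  set S : Matrix (Fin ω) (Fin n) D := Matrix.of fun (j : Fin ω) (k : Fin n) =>
      if (j : ℕ) = (k : ℕ) then z ^ i j else 0 with hS
  set B : Matrix (Fin n) (Fin ω) D := Matrix.of fun (k : Fin n) (j : Fin ω) =>
      if (k : ℕ) = (j : ℕ) then z ^ (i top - i j) else 0 with hB
  have hle : ∀ j : Fin ω, i j ≤ i top := fun j =>
    hmono (by simpa [htop, Fin.le_def] using Nat.le_pred_of_lt j.isLt : j ≤ top)
  have key : S * B = z ^ i top • (1 : Matrix (Fin ω) (Fin ω) D) := by
    ext j j'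
    rw [Matrix.mul_apply]
    rw [Finset.sum_eq_single (⟨(j : ℕ), lt_of_lt_of_le j.isLt hn⟩ : Fin n)]
    · by_cases h : j = j'
      · subst h
        simp [hS, hB, Matrix.one_apply, ← pow_add, Nat.add_sub_cancel' (hle j)]
      · have h' : (j : ℕ) ≠ (j' : ℕ) := fun hc => h (Fin.ext hc)
        simp [hS, hB, Matrix.one_apply, h, h']
    · intro k _ hk
      have : (j : ℕ) ≠ (k : ℕ) := fun hc => hk (Fin.ext hc.symm)
      simp [hS, this]
    · simp
  refine ⟨(↑hV.unit⁻¹ : Matrix (Fin n) (Fin n) D) * B * (↑hU.unit⁻¹ : Matrix (Fin ω) (Fin ω) D), ?_⟩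
  have hVe : V * (↑hV.unit⁻¹ : Matrix (Fin n) (Fin n) D) = 1 := by
    simpa [hV.unit_spec] using hV.unit.mul_inv
  have hUe : U * (↑hU.unit⁻¹ : Matrix (Fin ω) (Fin ω) D) = 1 := by
    simpa [hU.unit_spec] using hU.unit.mul_inv
  calc F * ((↑hV.unit⁻¹ : Matrix (Fin n) (Fin n) D) * B * (↑hU.unit⁻¹ : Matrix (Fin ω) (Fin ω) D))
      = U * S * (V * (↑hV.unit⁻¹ : Matrix (Fin n) (Fin n) D)) * B * (↑hU.unit⁻¹ : Matrix (Fin ω) (Fin ω) D) := by rw [hF]; simp only [Matrix.mul_assoc]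
    _ = U * (S * B) * (↑hU.unit⁻¹ : Matrix (Fin ω) (Fin ω) D) := by rw [hVe, Matrix.mul_one]; simp only [Matrix.mul_assoc]
    _ = z ^ i top • (U * (↑hU.unit⁻¹ : Matrix (Fin ω) (Fin ω) D)) := by
        simp [key, Matrix.mul_smul, Matrix.smul_mul]
    _ = z ^ i top • 1 := by rw [hUe]
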